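/- Let u ∈ H^{2l+1}(0,L) with D^i u(0) = D^i u(L) = 0 for i = 0,…,l−1 and D^l u(L) = 0. Then the quadratic form of the dispersive operator satisfies (Au, u)_{L^2} = ½ (D^l u(0))², where Au = Σ_{j=1}^{l} (−1)^{j+1} D^{2j+1} u. In particular (Au, u) ≥ 0. -/

import Mathlib

/-- For `u ∈ D(A)` (i.e. `u ∈ H^l₀ ∩ H^{2l+1}` with `D^l u(L) = 0`),
`(Au, u)_{L²} = ½ (D^l u(0))² ≥ 0`, where
`Au = ∑_{j=1}^{l} (−1)^{j+1} D^{2j+1} u`. Here `D i` is the `i`-th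
derivative of `u = D 0`. -/
theorem stmt_5 (L : ℝ) (hL : 0 < L) (l : ℕ) (hl : 1 ≤ l) (D : ℕ → ℝ → ℝ)
    (hderiv : ∀ i < 2*l+1, ∀ x ∈ Set.Icc (0:ℝ) L, HasDerivAt (D i) (D (i+1) x) x)
    (hcont : ∀ i ≤ 2*l+1, ContinuousOn (D i) (Set.Icc (0:ℝ) L))
    (hbc : ∀ i < l, D i 0 = 0 ∧ D i L = 0) (hbcl : D l L = 0) :
    (∫ x in (0:ℝ)..L,
        (∑ j ∈ Finset.Icc 1 l, (-1:ℝ)^(j+1) * D (2*j+1) x) * D 0 x)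
      = (D l 0)^2 / 2 ∧
    0 ≤ ∫ x in (0:ℝ)..L,
        (∑ j ∈ Finset.Icc 1 l, (-1:ℝ)^(j+1) * D (2*j+1) x) * D 0 x := by
  have hL' : (0:ℝ) ≤ L := hL.le
  have huIcc : Set.uIcc (0:ℝ) L = Set.Icc 0 L := Set.uIcc_of_le hL'
  have hint1 : ∀ m ≤ 2*l+1, IntervalIntegrable (D m) MeasureTheory.volume 0 L := by
    intro m hm
    apply ContinuousOn.intervalIntegrable
    rw [huIcc]; exact hcont m hm
  have hint : ∀ m ≤ 2*l+1, ∀ n ≤ 2*l+1,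
      IntervalIntegrable (fun x => D m x * D n x) MeasureTheory.volume 0 L := by
    intro m hm n hn
    apply ContinuousOn.intervalIntegrable
    rw [huIcc]; exact (hcont m hm).mul (hcont n hn)
  -- integration by parts
  have ibp : ∀ m n, m + 1 ≤ 2*l+1 → n + 1 ≤ 2*l+1 →
      (∫ x in (0:ℝ)..L, D (m+1) x * D n x)
        = D m L * D n L - D m 0 * D n 0 - ∫ x in (0:ℝ)..L, D m x * D (n+1) x := by
    intro m n hm hn
    have h := intervalIntegral.integral_mul_deriv_eq_deriv_mul
      (u := D n) (u' := D (n+1)) (v := D m) (v' := D (m+1))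
      (fun x hx => hderiv n (by omega) x (huIcc ▸ hx))
      (fun x hx => hderiv m (by omega) x (huIcc ▸ hx))
      (hint1 (n+1) hn) (hint1 (m+1) hm)
    have e1 : (∫ x in (0:ℝ)..L, D (m+1) x * D n x)
        = ∫ x in (0:ℝ)..L, D n x * D (m+1) x := by
      apply intervalIntegral.integral_congr; intro x _; ring
    have e2 : (∫ x in (0:ℝ)..L, D m x * D (n+1) x)
        = ∫ x in (0:ℝ)..L, D (n+1) x * D m x := by
      apply intervalIntegral.integral_congr; intro x _; ring
    rw [e1, e2, h]; ring
  -- FTC for the square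
  have sq : ∀ j, j + 1 ≤ 2*l+1 →
      (∫ x in (0:ℝ)..L, D (j+1) x * D j x) = ((D j L)^2 - (D j 0)^2)/2 := by
    intro j hj
    have h := intervalIntegral.integral_eq_sub_of_hasDerivAt
      (f := fun x => (D j x)^2/2) (f' := fun x => D (j+1) x * D j x)
      (fun x hx => by
        have h := hderiv j (by omega) x (huIcc ▸ hx)
        have h2 := (h.mul h).div_const 2
        simp only [pow_two]
        convert h2 using 1
        · rfl
        · rfl
        ring)
      (hint (j+1) hj j (by omega))
    rw [h]; ring
  -- iterated integration by parts
  have step : ∀ j, 1 ≤ j → j ≤ l → ∀ k, k ≤ j →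
      (∫ x in (0:ℝ)..L, D (2*j+1) x * D 0 x)
        = (-1:ℝ)^k * ∫ x in (0:ℝ)..L, D (2*j+1-k) x * D k x := by
    intro j hj1 hjl k
    induction k with
    | zero => intro _; simp
    | succ k ih =>
      intro hk
      have hk' : k ≤ j := by omega
      rw [ih hk']
      have heq1 : 2*j+1-k = (2*j-k)+1 := by omega
      have heq2 : 2*j+1-(k+1) = 2*j-k := by omega
      rw [heq1, heq2]
      rw [ibp (2*j-k) k (by omega) (by omega)]
      have hkl : k < l := by omega
      rw [(hbc k hkl).1, (hbc k hkl).2]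
      ring
  -- value of each term
  have hval : ∀ j ∈ Finset.Icc 1 l,
      (-1:ℝ)^(j+1) * ∫ x in (0:ℝ)..L, D (2*j+1) x * D 0 x
        = if j = l then (D l 0)^2/2 else 0 := by
    intro j hj
    rw [Finset.mem_Icc] at hj
    rw [step j hj.1 hj.2 j le_rfl]
    have heq : 2*j+1-j = j+1 := by omega
    rw [heq, sq j (by omega)]
    by_cases hjl : j = l
    · subst hjl
      rw [hbcl, if_pos rfl]
      have hpow : (-1:ℝ)^(j+1) * (-1:ℝ)^j = -1 := by
        rw [← pow_add, show j+1+j = 2*j+1 by omega]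
        exact Odd.neg_one_pow ⟨j, by ring⟩
      rw [← mul_assoc, hpow]; ring
    · rw [(hbc j (by omega)).1, (hbc j (by omega)).2, if_neg hjl]
      ring
  -- sum out of the integral
  have hsum : (∫ x in (0:ℝ)..L,
        (∑ j ∈ Finset.Icc 1 l, (-1:ℝ)^(j+1) * D (2*j+1) x) * D 0 x)
      = ∑ j ∈ Finset.Icc 1 l,
          (-1:ℝ)^(j+1) * ∫ x in (0:ℝ)..L, D (2*j+1) x * D 0 x := by
    have e : (∫ x in (0:ℝ)..L,
          (∑ j ∈ Finset.Icc 1 l, (-1:ℝ)^(j+1) * D (2*j+1) x) * D 0 x)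
        = ∫ x in (0:ℝ)..L,
          ∑ j ∈ Finset.Icc 1 l, (-1:ℝ)^(j+1) * (D (2*j+1) x * D 0 x) := by
      apply intervalIntegral.integral_congr; intro x _
      simp only [Finset.sum_mul, mul_assoc]
    rw [e, intervalIntegral.integral_finset_sum]
    · exact Finset.sum_congr rfl fun j hj => by
        rw [intervalIntegral.integral_const_mul]
    · intro j hj
      rw [Finset.mem_Icc] at hj
      exact (hint (2*j+1) (by omega) 0 (by omega)).const_mul _
  have hfin : (∫ x in (0:ℝ)..L,
        (∑ j ∈ Finset.Icc 1 l, (-1:ℝ)^(j+1) * D (2*j+1) x) * D 0 x)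
      = (D l 0)^2 / 2 := by
    rw [hsum, Finset.sum_congr rfl hval, Finset.sum_ite_eq' (Finset.Icc 1 l) l
      (fun _ => (D l 0)^2/2)]
    rw [if_pos (Finset.mem_Icc.mpr ⟨hl, le_rfl⟩)]
  exact ⟨hfin, hfin ▸ by positivity⟩
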